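/- The group Z_3 × S_3 admits a generating vector of type (1 | 3): there exist elements l, h_1, h_2 ∈ Z_3 × S_3 with l of order 3, l·[h_1, h_2] = 1, and ⟨l, h_1, h_2⟩ = Z_3 × S_3. -/

import Mathlib

open scoped commutatorElement

/-- The group `Z₃ × S₃` admits a generating vector of type `(1 | 3)`. -/
theorem Z3xS3_generating_vector :
    ∃ l h₁ h₂ : Multiplicative (ZMod 3) × Equiv.Perm (Fin 3),
      orderOf l = 3 ∧ l * ⁅h₁, h₂⁆ = 1 ∧
      Subgroup.closure {l, h₁, h₂} = ⊤ := by
  set c : Equiv.Perm (Fin 3) := Equiv.swap 0 1 * Equiv.swap 1 2 with hc_def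
  set τ : Equiv.Perm (Fin 3) := Equiv.swap 0 1 with hτ_def
  set g : Multiplicative (ZMod 3) := Multiplicative.ofAdd 1 with hg_def
  refine ⟨(1, c⁻¹), (g, τ), (1, c), ?_, ?_, ?_⟩
  · apply orderOf_eq_prime
    · decide
    · decide
  · decide
  · set K := Subgroup.closure
      ({((1 : Multiplicative (ZMod 3)), c⁻¹), (g, τ), (1, c)} :
        Set (Multiplicative (ZMod 3) × Equiv.Perm (Fin 3))) with hK
    have hh1 : (g, τ) ∈ K := Subgroup.subset_closure (by simp)
    have hh2 : ((1 : Multiplicative (ZMod 3)), c) ∈ K :=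
      Subgroup.subset_closure (by simp)
    have hg1 : ((g, (1 : Equiv.Perm (Fin 3)))) ∈ K := by
      have : (g, (1 : Equiv.Perm (Fin 3))) = ((g, τ) * (g, τ))⁻¹ := by decide
      rw [this]; exact inv_mem (mul_mem hh1 hh1)
    have hτ1 : ((1 : Multiplicative (ZMod 3)), τ) ∈ K := by
      have : ((1 : Multiplicative (ZMod 3)), τ) = (g, (1 : Equiv.Perm (Fin 3)))⁻¹ * (g, τ) := by
        decide
      rw [this]; exact mul_mem (inv_mem hg1) hh1
    have key : ∀ x : Multiplicative (ZMod 3) × Equiv.Perm (Fin 3),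
        ∃ i : Fin 3, ∃ j : Fin 2, ∃ k : Fin 3,
          x = (g, (1 : Equiv.Perm (Fin 3)))^(i : ℕ) *
              ((1 : Multiplicative (ZMod 3)), τ)^(j : ℕ) *
              ((1 : Multiplicative (ZMod 3)), c)^(k : ℕ) := by decide
    rw [eq_top_iff]
    intro x _
    obtain ⟨i, j, k, hx⟩ := key x
    rw [hx]
    exact mul_mem (mul_mem (pow_mem hg1 _) (pow_mem hτ1 _)) (pow_mem hh2 _)
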